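/- Let β_t be a CPM and ρ^z_t(X) = ess inf{ξ ∈ L^{bb}_t : β_t(X+ξ) ≥ z} its induced risk measure for z_d < z < z_u. Then for any B ∈ F_t: β_t(X) > z on B if and only if ρ^z_t(X) < 0 on B; equivalently, β_t(X) ≤ z on B if and only if ρ^z_t(X) ≥ 0 on B. -/

import Mathlib

open MeasureTheory Filter Set Topology

noncomputable section

variable {Ω : Type*}

/-- The lattice of `m`-measurable random variables bounded from below
(possibly `+∞`-valued). -/
def Lbb (m : MeasurableSpace Ω) : Set (Ω → EReal) :=
  {X | Measurable[m] X ∧ ∃ c : ℝ, ∀ ω, (c : EReal) ≤ X ω}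

/-- `ρ` is the `P`-essential infimum of the family `S` of (`m`-measurable)
random variables. -/
def IsEssInfFam {F : MeasurableSpace Ω} (m : MeasurableSpace Ω) (P : @Measure Ω F)
    (S : Set (Ω → EReal)) (ρ : Ω → EReal) : Prop :=
  Measurable[m] ρ ∧ (∀ ξ ∈ S, ∀ᵐ ω ∂P, ρ ω ≤ ξ ω) ∧
    ∀ η : Ω → EReal, Measurable[m] η → (∀ ξ ∈ S, ∀ᵐ ω ∂P, η ω ≤ ξ ω) →
      ∀ᵐ ω ∂P, η ω ≤ ρ ω

/-- `g` is, on the set `C`, the `P`-essential supremum of the family `S`. -/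
def IsEssSupFamOn {F : MeasurableSpace Ω} (m : MeasurableSpace Ω) (P : @Measure Ω F)
    (S : Set (Ω → EReal)) (g : Ω → EReal) (C : Set Ω) : Prop :=
  (∀ φ ∈ S, ∀ᵐ ω ∂P, ω ∈ C → φ ω ≤ g ω) ∧
    ∀ η : Ω → EReal, Measurable[m] η → (∀ φ ∈ S, ∀ᵐ ω ∂P, ω ∈ C → φ ω ≤ η ω) →
      ∀ᵐ ω ∂P, ω ∈ C → g ω ≤ η ω

/-- A conditional performance measure (CPM) `β` conditional to the sub-σ-algebra `m`,
defined on `F`-measurable variables bounded from below, with non-random essential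
bounds `zd < zu`. -/
structure IsCPM (F m : MeasurableSpace Ω) (P : @Measure Ω F)
    (β : (Ω → EReal) → Ω → EReal) (zd zu : EReal) : Prop where
  maps : ∀ X ∈ Lbb F, β X ∈ Lbb m
  quasiConcave : ∀ X ∈ Lbb F, ∀ Y ∈ Lbb F, ∀ c : ℝ, 0 ≤ c → c ≤ 1 →
    ∀ᵐ ω ∂P, min (β X ω) (β Y ω) ≤
      β (fun ω' => (c : EReal) * X ω' + ((1 - c : ℝ) : EReal) * Y ω') ω
  lt_bounds : zd < zu
  le_zu : ∀ X ∈ Lbb F, ∀ᵐ ω ∂P, β X ω ≤ zu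
  zu_least : ∀ η : Ω → EReal, Measurable[m] η →
    (∀ X ∈ Lbb F, ∀ᵐ ω ∂P, β X ω ≤ η ω) → ∀ᵐ ω ∂P, zu ≤ η ω
  zd_le : ∀ X ∈ Lbb F, ∀ᵐ ω ∂P, zd ≤ β X ω
  zd_greatest : ∀ η : Ω → EReal, Measurable[m] η →
    (∀ X ∈ Lbb F, ∀ᵐ ω ∂P, η ω ≤ β X ω) → ∀ᵐ ω ∂P, η ω ≤ zd
  mono : ∀ X Y : Ω → EReal, (∀ ω, Y ω ≤ X ω) → ∀ᵐ ω ∂P, β Y ω ≤ β X ω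
  strictShift : ∀ X ∈ Lbb F, ∀ c : ℝ, 0 < c →
    ∀ᵐ ω ∂P, β X ω < zu → zd < β (fun ω' => X ω' + (c : EReal)) ω →
      β X ω < β (fun ω' => X ω' + (c : EReal)) ω
  contBelow : ∀ (Xs : ℕ → Ω → EReal) (X : Ω → EReal), (∀ n, Xs n ∈ Lbb F) → X ∈ Lbb F →
    (∀ ω, Monotone fun n => Xs n ω) → (∀ ω, X ω = ⨆ n, Xs n ω) →
    ∀ᵐ ω ∂P, β X ω = ⨆ n, β (Xs n) ω
  loc : ∀ X ∈ Lbb F, ∀ B : Set Ω, MeasurableSet[m] B →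
    ∀ᵐ ω ∂P, ω ∈ B → β X ω = β (B.indicator X) ω
  levelBdd : ∀ z : ℝ, zd < (z : EReal) → (z : EReal) < zu →
    ∃ x : ℝ, ∀ ξ ∈ Lbb m, (∀ᵐ ω ∂P, (z : EReal) ≤ β ξ ω) → ∀ᵐ ω ∂P, (x : EReal) ≤ ξ ω

/-- Scale invariance of a conditional performance measure. -/
def ScaleInvariant (F : MeasurableSpace Ω) (P : @Measure Ω F)
    (β : (Ω → EReal) → Ω → EReal) : Prop :=
  ∀ X ∈ Lbb F, ∀ c : ℝ, 0 < c → ∀ᵐ ω ∂P, β (fun ω' => (c : EReal) * X ω') ω = β X ω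

/-- The set `M^z_t(X) = {ξ ∈ L^{bb}_t : β_t(X + ξ) ≥ z}`. -/
def Mset (F m : MeasurableSpace Ω) (P : @Measure Ω F)
    (β : (Ω → EReal) → Ω → EReal) (z : ℝ) (X : Ω → EReal) : Set (Ω → EReal) :=
  {ξ | ξ ∈ Lbb m ∧ ∀ᵐ ω ∂P, (z : EReal) ≤ β (fun ω' => X ω' + ξ ω') ω}

/-- The family of simple `m`-measurable variables `φ = Σ z_i 1_{B_i}` with
`zd < φ < zu` and `ρ^{z_i} < 0` on `B_i ∩ C`. -/
def SimpleFam {F : MeasurableSpace Ω} (m : MeasurableSpace Ω) (P : @Measure Ω F)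
    (ρ : ℝ → Ω → EReal) (zd zu : EReal) (C : Set Ω) : Set (Ω → EReal) :=
  {φ | ∃ (n : ℕ) (zs : Fin n → ℝ) (Bs : Fin n → Set Ω),
    (∀ i, MeasurableSet[m] (Bs i)) ∧ Pairwise (Function.onFun Disjoint Bs) ∧
    (⋃ i, Bs i) = Set.univ ∧
    (∀ i, zd < (zs i : EReal) ∧ (zs i : EReal) < zu) ∧
    (∀ i, ∀ ω ∈ Bs i, φ ω = (zs i : EReal)) ∧
    (∀ i, ∀ᵐ ω ∂P, ω ∈ Bs i ∩ C → ρ (zs i) ω < 0)}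

/-- A standard family of conditional convex risk measures `(σ^z)_{z ∈ (zd, zu)}`. -/
structure IsStdFamily (F m : MeasurableSpace Ω) (P : @Measure Ω F)
    (σ : ℝ → (Ω → EReal) → Ω → EReal) (zd zu : EReal) : Prop where
  lt_bounds : zd < zu
  maps : ∀ z : ℝ, zd < (z : EReal) → (z : EReal) < zu → ∀ X ∈ Lbb F,
    Measurable[m] (σ z X) ∧ ∃ C : ℝ, ∀ ω, σ z X ω ≤ (C : EReal)
  boundedOnBounded : ∀ z : ℝ, zd < (z : EReal) → (z : EReal) < zu → ∀ X ∈ Lbb F,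
    (∃ C : ℝ, ∀ ω, X ω ≤ (C : EReal)) → ∃ c : ℝ, ∀ ω, (c : EReal) ≤ σ z X ω
  convex : ∀ z : ℝ, zd < (z : EReal) → (z : EReal) < zu →
    ∀ X ∈ Lbb F, ∀ Y ∈ Lbb F, ∀ c : ℝ, 0 ≤ c → c ≤ 1 →
    ∀ᵐ ω ∂P, σ z (fun ω' => (c : EReal) * X ω' + ((1 - c : ℝ) : EReal) * Y ω') ω ≤
      (c : EReal) * σ z X ω + ((1 - c : ℝ) : EReal) * σ z Y ω
  anti : ∀ z : ℝ, zd < (z : EReal) → (z : EReal) < zu → ∀ X Y : Ω → EReal,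
    (∀ ω, Y ω ≤ X ω) → ∀ᵐ ω ∂P, σ z X ω ≤ σ z Y ω
  transInv : ∀ z : ℝ, zd < (z : EReal) → (z : EReal) < zu → ∀ X ∈ Lbb F, ∀ ξ ∈ Lbb m,
    ∀ᵐ ω ∂P, σ z (fun ω' => X ω' + ξ ω') ω = σ z X ω - ξ ω
  loc : ∀ z : ℝ, zd < (z : EReal) → (z : EReal) < zu → ∀ X ∈ Lbb F,
    ∀ B : Set Ω, MeasurableSet[m] B →
    ∀ᵐ ω ∂P, ω ∈ B → σ z X ω = σ z (B.indicator X) ω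
  contBelow : ∀ z : ℝ, zd < (z : EReal) → (z : EReal) < zu →
    ∀ (Xs : ℕ → Ω → EReal) (X : Ω → EReal), (∀ n, Xs n ∈ Lbb F) → X ∈ Lbb F →
    (∀ ω, Monotone fun n => Xs n ω) → (∀ ω, X ω = ⨆ n, Xs n ω) →
    ∀ᵐ ω ∂P, σ z X ω = ⨅ n, σ z (Xs n) ω
  paths : ∀ X ∈ Lbb F, ∀ᵐ ω ∂P,
    MonotoneOn (fun z : ℝ => σ z X ω) {z : ℝ | zd < (z : EReal) ∧ (z : EReal) < zu} ∧
    ContinuousOn (fun z : ℝ => σ z X ω) {z : ℝ | zd < (z : EReal) ∧ (z : EReal) < zu}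
  botLim : zd = ⊥ →
    Tendsto (fun z : ℝ => essSup (σ z (fun _ => 0)) P) atBot (𝓝 (⊥ : EReal))

/-- The set `B_X = ∩_{z ∈ (zd,zu)} {σ^z(X) ≥ 0}`. -/
def BXset (σ : ℝ → (Ω → EReal) → Ω → EReal) (zd zu : EReal) (X : Ω → EReal) : Set Ω :=
  {ω | ∀ z : ℝ, zd < (z : EReal) → (z : EReal) < zu → 0 ≤ σ z X ω}

/-- `g` is the value at `X` of the performance measure generated by the standard
family `σ`:  `g = zd 1_{B_X} + 1_{B_X^c} esssup{φ simple : σ^{z_i}(X) < 0 on B_i ∩ B_X^c}`. -/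
def GeneratedBy (F m : MeasurableSpace Ω) (P : @Measure Ω F)
    (σ : ℝ → (Ω → EReal) → Ω → EReal) (zd zu : EReal)
    (X : Ω → EReal) (g : Ω → EReal) : Prop :=
  (∀ᵐ ω ∂P, ω ∈ BXset σ zd zu X → g ω = zd) ∧
  IsEssSupFamOn m P (SimpleFam m P (fun z => σ z X) zd zu ((BXset σ zd zu X)ᶜ)) g
    ((BXset σ zd zu X)ᶜ)

lemma Measurable.ereal_add' {α : Type*} [MeasurableSpace α] {f g : α → EReal}
    (hf : Measurable f) (hg : Measurable g) : Measurable fun ω => f ω + g ω := by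
  have h : (fun ω => f ω + g ω) = fun ω =>
      if f ω = ⊥ ∨ g ω = ⊥ then ⊥
      else if f ω = ⊤ ∨ g ω = ⊤ then ⊤
      else (((f ω).toReal + (g ω).toReal : ℝ) : EReal) := by
    funext ω
    by_cases hb : f ω = ⊥ ∨ g ω = ⊥
    · rcases hb with h | h <;> simp [h]
    · push_neg at hb
      rw [if_neg (by simp [hb.1, hb.2])]
      by_cases ht : f ω = ⊤ ∨ g ω = ⊤
      · rw [if_pos ht]
        rcases ht with h | h
        · rw [h, EReal.top_add_of_ne_bot hb.2]
        · rw [h, EReal.add_top_of_ne_bot hb.1]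
      · push_neg at ht
        rw [if_neg (by simp [ht.1, ht.2]), EReal.coe_add,
          EReal.coe_toReal ht.1 hb.1, EReal.coe_toReal ht.2 hb.2]
  rw [h]
  refine Measurable.ite ?_ measurable_const (Measurable.ite ?_ measurable_const ?_)
  · exact MeasurableSet.union (hf (measurableSet_singleton ⊥)) (hg (measurableSet_singleton ⊥))
  · exact MeasurableSet.union (hf (measurableSet_singleton ⊤)) (hg (measurableSet_singleton ⊤))
  · exact (hf.ereal_toReal.add hg.ereal_toReal).coe_real_ereal

lemma ereal_neg_add_cancel (x : EReal) (hx : x ≠ ⊥) (δ : ℝ) :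
    x + ((-δ : ℝ) : EReal) + ((δ : ℝ) : EReal) = x := by
  induction x with
  | bot => simp at hx
  | coe r => norm_cast; ring
  | top => rw [EReal.top_add_coe, EReal.top_add_coe]

lemma ereal_exists_nat (x : EReal) (hx : x < 0) :
    ∃ n : ℕ, x ≤ ((-(1/(n+1) : ℝ)) : EReal) := by
  induction x with
  | bot => exact ⟨0, bot_le⟩
  | coe r =>
    have hr : r < 0 := by exact_mod_cast hx
    obtain ⟨n, hn⟩ := exists_nat_one_div_lt (neg_pos.mpr hr)
    exact ⟨n, by exact_mod_cast (by linarith : r ≤ -(1/(n+1)))⟩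
  | top => exact absurd hx not_top_lt

/-- Core lemma: any `ξ` in the acceptance set is nonnegative a.e. on `{β X ≤ z}`. -/
lemma keyL {Ω : Type*} (F m : MeasurableSpace Ω) (hm : m ≤ F) (P : @Measure Ω F)
    (β : (Ω → EReal) → Ω → EReal) (zd zu : EReal)
    (hCPM : IsCPM F m P β zd zu)
    (z : ℝ) (hz₁ : zd < (z : EReal)) (hz₂ : (z : EReal) < zu)
    (X : Ω → EReal) (hX : X ∈ Lbb F)
    (ξ : Ω → EReal) (hξ : ξ ∈ Mset F m P β z X) :
    ∀ᵐ ω ∂P, β X ω ≤ (z : EReal) → 0 ≤ ξ ω := by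
  classical
  obtain ⟨⟨hξm, cξ, hcξ⟩, hξβ⟩ := hξ
  obtain ⟨hXm, cX, hcX⟩ := hX
  have hX' : X ∈ Lbb F := ⟨hXm, cX, hcX⟩
  have hXnb : ∀ ω, X ω ≠ ⊥ := fun ω => ((EReal.bot_lt_coe cX).trans_le (hcX ω)).ne'
  have hξnb : ∀ ω, ξ ω ≠ ⊥ := fun ω => ((EReal.bot_lt_coe cξ).trans_le (hcξ ω)).ne'
  have hβXm : Measurable[m] (β X) := (hCPM.maps X hX').1
  -- for each n, a.e. ω, ¬(β X ω ≤ z ∧ ξ ω ≤ -(1/(n+1)))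
  have key : ∀ n : ℕ, ∀ᵐ ω ∂P,
      ¬(β X ω ≤ (z : EReal) ∧ ξ ω ≤ ((-(1/(n+1) : ℝ)) : EReal)) := by
    intro n
    set δ : ℝ := 1/(n+1) with hδdef
    have hδ : 0 < δ := by positivity
    set E : Set Ω := {ω | β X ω ≤ (z : EReal) ∧ ξ ω ≤ ((-δ : ℝ) : EReal)} with hEdef
    have hEm : MeasurableSet[m] E :=
      (hβXm measurableSet_Iic).inter (hξm measurableSet_Iic)
    have hXξ : (fun ω => X ω + ξ ω) ∈ Lbb F := by
      refine ⟨@Measurable.ereal_add' Ω F _ _ hXm (hξm.mono hm le_rfl), cX + cξ, fun ω => ?_⟩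
      rw [EReal.coe_add]
      exact add_le_add (hcX ω) (hcξ ω)
    have hXd : (fun ω => X ω + ((-δ : ℝ) : EReal)) ∈ Lbb F := by
      refine ⟨@Measurable.ereal_add' Ω F _ _ hXm (@measurable_const _ _ _ F _), cX + (-δ),
        fun ω => ?_⟩
      rw [EReal.coe_add]
      exact add_le_add (hcX ω) le_rfl
    have loc₁ := hCPM.loc _ hXξ E hEm
    have loc₂ := hCPM.loc _ hXd E hEm
    have monoYZ := hCPM.mono (E.indicator (fun ω => X ω + ((-δ : ℝ) : EReal)))
      (E.indicator (fun ω => X ω + ξ ω)) (by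
        intro ω
        by_cases hω : ω ∈ E
        · rw [Set.indicator_of_mem hω, Set.indicator_of_mem hω]
          exact add_le_add_right hω.2 _
        · rw [Set.indicator_of_notMem hω, Set.indicator_of_notMem hω])
    have monoXd := hCPM.mono X (fun ω => X ω + ((-δ : ℝ) : EReal)) (by
      intro ω
      calc X ω + ((-δ : ℝ) : EReal) ≤ X ω + 0 := by
            refine add_le_add_right ?_ _
            exact_mod_cast neg_nonpos.mpr hδ.le
        _ = X ω := add_zero _)
    have hcancel : (fun ω' => (fun ω => X ω + ((-δ : ℝ) : EReal)) ω' + ((δ : ℝ) : EReal)) = X := by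
      funext ω
      exact ereal_neg_add_cancel (X ω) (hXnb ω) δ
    have strict := hCPM.strictShift _ hXd δ hδ
    rw [hcancel] at strict
    filter_upwards [hξβ, loc₁, loc₂, monoYZ, monoXd, strict] with ω h1 h2 h3 h4 h5 h6
    rintro ⟨ha, hb⟩
    have hωE : ω ∈ E := ⟨ha, hb⟩
    have c1 : (z : EReal) ≤ β (fun ω => X ω + ((-δ : ℝ) : EReal)) ω := by
      rw [h3 hωE]
      exact (h1.trans_eq (h2 hωE)).trans h4
    have c2 : β (fun ω => X ω + ((-δ : ℝ) : EReal)) ω ≤ (z : EReal) := le_trans h5 ha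
    exact absurd (h6 (c2.trans_lt hz₂) (hz₁.trans_le (c1.trans h5)))
      (not_lt.mpr (ha.trans c1))
  filter_upwards [ae_all_iff.mpr key] with ω h hle
  by_contra hneg
  push_neg at hneg
  obtain ⟨n, hn⟩ := ereal_exists_nat _ hneg
  exact h n ⟨hle, hn⟩
lemma ereal_isup_add_nat (x : EReal) (c : ℝ) (hc : (c : EReal) ≤ x) :
    ⨆ n : ℕ, (x + ((n : ℝ) : EReal)) = ⊤ := by
  rw [iSup_eq_top]
  intro b hb
  induction b with
  | bot =>
    refine ⟨0, lt_of_lt_of_le (EReal.bot_lt_coe c) ?_⟩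
    refine le_trans hc ?_
    simp
  | coe r =>
    obtain ⟨n, hn⟩ := exists_nat_gt (r - c)
    refine ⟨n, lt_of_lt_of_le ?_ (add_le_add hc le_rfl)⟩
    rw [← EReal.coe_add]
    exact_mod_cast by linarith
  | top => simp at hb

lemma ereal_isup_sub (x : EReal) (hx : x ≠ ⊥) :
    ⨆ n : ℕ, (x + ((-(1/(n+1) : ℝ)) : EReal)) = x := by
  refine le_antisymm (iSup_le fun n => ?_) ?_
  · calc x + ((-(1/(n+1) : ℝ)) : EReal) ≤ x + 0 := by
          refine add_le_add_right ?_ x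
          exact_mod_cast neg_nonpos.mpr (by positivity)
      _ = x := add_zero x
  · induction x with
    | bot => simp at hx
    | top =>
      refine le_trans (le_of_eq ?_) (le_iSup _ 0)
      rw [← EReal.coe_neg, EReal.top_add_coe]
    | coe r =>
      rw [le_iSup_iff]
      intro b hb
      induction b with
      | bot =>
        exfalso
        have h0 := hb 0
        rw [← EReal.coe_neg, ← EReal.coe_add] at h0
        exact EReal.coe_ne_bot _ (le_bot_iff.mp h0)
      | top => exact le_top
      | coe s =>
        refine EReal.coe_le_coe_iff.mpr ?_
        by_contra hrs
        push_neg at hrs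
        obtain ⟨n, hn⟩ := exists_nat_one_div_lt (sub_pos.mpr hrs)
        have h1 := hb n
        rw [← EReal.coe_neg, ← EReal.coe_add] at h1
        have h2 := EReal.coe_le_coe_iff.mp h1
        linarith
lemma auxG2 {Ω : Type*} (F m : MeasurableSpace Ω) (hm : m ≤ F) (P : @Measure Ω F)
    (β : (Ω → EReal) → Ω → EReal) (zd zu : EReal)
    (hCPM : IsCPM F m P β zd zu)
    (z : ℝ) (hz₁ : zd < (z : EReal)) (hz₂ : (z : EReal) < zu)
    (X : Ω → EReal) (hX : X ∈ Lbb F)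
    (ρ : Ω → EReal) (hρ : IsEssInfFam m P (Mset F m P β z X) ρ) :
    ∀ᵐ ω ∂P, β X ω ≤ (z : EReal) → 0 ≤ ρ ω := by
  classical
  have hβXm : Measurable[m] (β X) := (hCPM.maps X hX).1
  set η : Ω → EReal := fun ω => if β X ω ≤ (z : EReal) then (0 : EReal) else ⊥ with hη
  have hηm : Measurable[m] η :=
    Measurable.ite (hβXm measurableSet_Iic) (@measurable_const _ _ _ m _)
      (@measurable_const _ _ _ m _)
  have hb : ∀ ξ ∈ Mset F m P β z X, ∀ᵐ ω ∂P, η ω ≤ ξ ω := by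
    intro ξ hξ
    filter_upwards [keyL F m hm P β zd zu hCPM z hz₁ hz₂ X hX ξ hξ] with ω h
    by_cases hc : β X ω ≤ (z : EReal)
    · simpa [hη, hc] using h hc
    · simp [hη, hc]
  filter_upwards [hρ.2.2 η hηm hb] with ω h hle
  simpa [hη, hle] using h
lemma auxG1 {Ω : Type*} (F m : MeasurableSpace Ω) (hm : m ≤ F) (P : @Measure Ω F)
    (β : (Ω → EReal) → Ω → EReal) (zd zu : EReal)
    (hCPM : IsCPM F m P β zd zu)
    (z : ℝ) (hz₁ : zd < (z : EReal)) (hz₂ : (z : EReal) < zu)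
    (X : Ω → EReal) (hX : X ∈ Lbb F)
    (ρ : Ω → EReal) (hρ : IsEssInfFam m P (Mset F m P β z X) ρ) :
    ∀ᵐ ω ∂P, (z : EReal) < β X ω → ρ ω < 0 := by
  classical
  obtain ⟨hXm, cX, hcX⟩ := hX
  have hX' : X ∈ Lbb F := ⟨hXm, cX, hcX⟩
  have hXnb : ∀ ω, X ω ≠ ⊥ := fun ω => ((EReal.bot_lt_coe cX).trans_le (hcX ω)).ne'
  -- upward shifted variables
  set Xn : ℕ → Ω → EReal := fun n ω => X ω + ((n : ℝ) : EReal) with hXndef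
  have hXnLbb : ∀ n, Xn n ∈ Lbb F := fun n =>
    ⟨@Measurable.ereal_add' Ω F _ _ hXm (@measurable_const _ _ _ F _), cX + n, fun ω => by
      rw [EReal.coe_add]; exact add_le_add (hcX ω) le_rfl⟩
  have hβm : ∀ n, Measurable[m] (β (Xn n)) := fun n => (hCPM.maps _ (hXnLbb n)).1
  have hTopLbb : (fun _ : Ω => (⊤ : EReal)) ∈ Lbb F :=
    ⟨@measurable_const _ _ _ F _, 0, fun ω => le_top⟩
  -- a.e. there is n with z < β (Xn n)
  have hcb := hCPM.contBelow Xn (fun _ => ⊤) hXnLbb hTopLbb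
    (fun ω a b hab => add_le_add_right (EReal.coe_le_coe_iff.mpr (Nat.cast_le.mpr hab)) _)
    (fun ω => (ereal_isup_add_nat (X ω) cX (hcX ω)).symm)
  have hzu_le := hCPM.zu_least (β (fun _ => ⊤)) (hCPM.maps _ hTopLbb).1
    (fun Y hY => hCPM.mono _ Y (fun ω => le_top))
  have hexists : ∀ᵐ ω ∂P, ∃ n, (z : EReal) < β (Xn n) ω := by
    filter_upwards [hcb, hzu_le] with ω e1 e2
    refine lt_iSup_iff.mp ?_
    rw [← e1]
    exact lt_of_lt_of_le hz₂ e2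
  -- the sets where n is the first index with z < β (Xn n)
  set A : ℕ → Set Ω := fun n =>
    {ω | (z : EReal) < β (Xn n) ω ∧ ∀ k, k < n → ¬ (z : EReal) < β (Xn k) ω} with hAdef
  have hAm : ∀ n, MeasurableSet[m] (A n) := by
    intro n
    have heq : A n = (β (Xn n) ⁻¹' Set.Ioi (z : EReal)) ∩
        ⋂ k ∈ Finset.range n, (β (Xn k) ⁻¹' Set.Ioi (z : EReal))ᶜ := by
      ext ω
      simp only [hAdef, Set.mem_setOf_eq, Set.mem_inter_iff, Set.mem_preimage,
        Set.mem_Ioi, Set.mem_iInter, Set.mem_compl_iff, Finset.mem_range]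
    rw [heq]
    exact ((hβm n) measurableSet_Ioi).inter
      (MeasurableSet.biInter (Finset.range n).countable_toSet
        (fun k _ => ((hβm k) measurableSet_Ioi).compl))
  -- ξ0 : the first-time shift
  set g0 : ℕ → Ω → EReal := fun n ω =>
    if (z : EReal) < β (Xn n) ω then ((n : ℝ) : EReal) else ⊤ with hg0
  set ξ0 : Ω → EReal := fun ω => ⨅ n, g0 n ω with hξ0def
  have hξ0m : Measurable[m] ξ0 := Measurable.iInf fun n =>
    Measurable.ite ((hβm n) measurableSet_Ioi) (@measurable_const _ _ _ m _)
      (@measurable_const _ _ _ m _)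
  have hξ0nonneg : ∀ ω, (0 : EReal) ≤ ξ0 ω := by
    intro ω
    refine le_iInf fun n => ?_
    by_cases hc : (z : EReal) < β (Xn n) ω
    · rw [hg0]; dsimp only; rw [if_pos hc]
      exact_mod_cast Nat.cast_nonneg n
    · rw [hg0]; dsimp only; rw [if_neg hc]; exact le_top
  have hξ0Lbb : ξ0 ∈ Lbb m := ⟨hξ0m, 0, fun ω => by
    rw [EReal.coe_zero]; exact hξ0nonneg ω⟩
  have hξ0val : ∀ n ω, ω ∈ A n → ξ0 ω = ((n : ℝ) : EReal) := by
    intro n ω hω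
    refine le_antisymm (le_trans (iInf_le _ n) ?_) (le_iInf fun k => ?_)
    · rw [hg0]; dsimp only; rw [if_pos hω.1]
    · by_cases hc : (z : EReal) < β (Xn k) ω
      · have hnk : n ≤ k := le_of_not_gt fun hlt => hω.2 k hlt hc
        rw [hg0]; dsimp only; rw [if_pos hc]
        exact EReal.coe_le_coe_iff.mpr (Nat.cast_le.mpr hnk)
      · rw [hg0]; dsimp only; rw [if_neg hc]; exact le_top
  have hXξ0Lbb : (fun ω => X ω + ξ0 ω) ∈ Lbb F := by
    refine ⟨@Measurable.ereal_add' Ω F _ _ hXm (hξ0m.mono hm le_rfl), cX, fun ω => ?_⟩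
    calc (cX : EReal) = (cX : EReal) + 0 := (add_zero _).symm
      _ ≤ X ω + ξ0 ω := add_le_add (hcX ω) (hξ0nonneg ω)
  have hlocn : ∀ n, ∀ᵐ ω ∂P, ω ∈ A n → β (fun ω' => X ω' + ξ0 ω') ω = β (Xn n) ω := by
    intro n
    have l1 := hCPM.loc _ hXξ0Lbb (A n) (hAm n)
    have l2 := hCPM.loc _ (hXnLbb n) (A n) (hAm n)
    have heq : (A n).indicator (fun ω' => X ω' + ξ0 ω') = (A n).indicator (Xn n) := by
      funext ω
      by_cases hω : ω ∈ A n
      · rw [Set.indicator_of_mem hω, Set.indicator_of_mem hω, hξ0val n ω hω]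
      · rw [Set.indicator_of_notMem hω, Set.indicator_of_notMem hω]
    rw [heq] at l1
    filter_upwards [l1, l2] with ω e1 e2 hω
    rw [e1 hω, ← e2 hω]
  have hξ0M : ξ0 ∈ Mset F m P β z X := by
    refine ⟨hξ0Lbb, ?_⟩
    filter_upwards [hexists, ae_all_iff.mpr hlocn] with ω he hl
    have hf : ω ∈ A (Nat.find he) := ⟨Nat.find_spec he, fun k hk => Nat.find_min he hk⟩
    rw [hl _ hf]
    exact (Nat.find_spec he).le
  -- downward shifted variables
  set Yn : ℕ → Ω → EReal := fun n ω => X ω + ((-(1/(n+1) : ℝ)) : EReal) with hYndef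
  have hYnLbb : ∀ n, Yn n ∈ Lbb F := fun n =>
    ⟨@Measurable.ereal_add' Ω F _ _ hXm (@measurable_const _ _ _ F _), cX + (-(1/(n+1))),
      fun ω => by rw [EReal.coe_add]; exact add_le_add (hcX ω) le_rfl⟩
  have hβYm : ∀ n, Measurable[m] (β (Yn n)) := fun n => (hCPM.maps _ (hYnLbb n)).1
  have hmono2 : ∀ ω, Monotone fun n => Yn n ω := by
    intro ω a b hab
    refine add_le_add_right ?_ _
    have h1 : (1/((b:ℝ)+1) : ℝ) ≤ 1/((a:ℝ)+1) :=
      one_div_le_one_div_of_le (by positivity) (add_le_add_left (Nat.cast_le.mpr hab) 1)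
    exact_mod_cast neg_le_neg h1
  have hcb2 := hCPM.contBelow Yn X hYnLbb hX' hmono2
    (fun ω => (ereal_isup_sub (X ω) (hXnb ω)).symm)
  set D : ℕ → Set Ω := fun n =>
    {ω | (z : EReal) < β (Yn n) ω ∧ ∀ k, k < n → ¬ (z : EReal) < β (Yn k) ω} with hDdef
  have hDm : ∀ n, MeasurableSet[m] (D n) := by
    intro n
    have heq : D n = (β (Yn n) ⁻¹' Set.Ioi (z : EReal)) ∩
        ⋂ k ∈ Finset.range n, (β (Yn k) ⁻¹' Set.Ioi (z : EReal))ᶜ := by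
      ext ω
      simp only [hDdef, Set.mem_setOf_eq, Set.mem_inter_iff, Set.mem_preimage,
        Set.mem_Ioi, Set.mem_iInter, Set.mem_compl_iff, Finset.mem_range]
    rw [heq]
    exact ((hβYm n) measurableSet_Ioi).inter
      (MeasurableSet.biInter (Finset.range n).countable_toSet
        (fun k _ => ((hβYm k) measurableSet_Ioi).compl))
  set Dinf : Set Ω := {ω | ∀ n, ¬ (z : EReal) < β (Yn n) ω} with hDinfdef
  have hDinfm : MeasurableSet[m] Dinf := by
    have heq : Dinf = ⋂ n, (β (Yn n) ⁻¹' Set.Ioi (z : EReal))ᶜ := by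
      ext ω
      simp only [hDinfdef, Set.mem_setOf_eq, Set.mem_iInter, Set.mem_compl_iff,
        Set.mem_preimage, Set.mem_Ioi]
    rw [heq]
    exact MeasurableSet.iInter fun n => ((hβYm n) measurableSet_Ioi).compl
  set g1 : ℕ → Ω → EReal := fun n ω =>
    if (z : EReal) < β (Yn n) ω then ((-(1/(n+1) : ℝ)) : EReal) else ξ0 ω with hg1
  set ξ1 : Ω → EReal := fun ω => ⨅ n, g1 n ω with hξ1def
  have hξ1m : Measurable[m] ξ1 := Measurable.iInf fun n =>
    Measurable.ite ((hβYm n) measurableSet_Ioi) (@measurable_const _ _ _ m _) hξ0m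
  have hg1lb : ∀ n ω, ((-1 : ℝ) : EReal) ≤ g1 n ω := by
    intro n ω
    by_cases hc : (z : EReal) < β (Yn n) ω
    · rw [hg1]; dsimp only; rw [if_pos hc]
      have h1 : (1/((n:ℝ)+1) : ℝ) ≤ 1 := by
        rw [div_le_one (by positivity)]
        simp [Nat.cast_nonneg]
      exact_mod_cast (by linarith : (-1 : ℝ) ≤ -(1/((n:ℝ)+1)))
    · rw [hg1]; dsimp only; rw [if_neg hc]
      refine le_trans ?_ (hξ0nonneg ω)
      exact_mod_cast (by norm_num : (-1 : ℝ) ≤ 0)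
  have hξ1lb : ∀ ω, ((-1 : ℝ) : EReal) ≤ ξ1 ω := fun ω => le_iInf fun n => hg1lb n ω
  have hξ1Lbb : ξ1 ∈ Lbb m := ⟨hξ1m, -1, fun ω => hξ1lb ω⟩
  have hξ1val : ∀ n ω, ω ∈ D n → ξ1 ω = ((-(1/(n+1) : ℝ)) : EReal) := by
    intro n ω hω
    refine le_antisymm (le_trans (iInf_le _ n) ?_) (le_iInf fun k => ?_)
    · rw [hg1]; dsimp only; rw [if_pos hω.1]
    · by_cases hc : (z : EReal) < β (Yn k) ω
      · have hnk : n ≤ k := le_of_not_gt fun hlt => hω.2 k hlt hc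
        rw [hg1]; dsimp only; rw [if_pos hc]
        have h1 : (1/((k:ℝ)+1) : ℝ) ≤ 1/((n:ℝ)+1) :=
          one_div_le_one_div_of_le (by positivity) (add_le_add_left (Nat.cast_le.mpr hnk) 1)
        exact_mod_cast neg_le_neg h1
      · rw [hg1]; dsimp only; rw [if_neg hc]
        refine le_trans ?_ (hξ0nonneg ω)
        exact_mod_cast neg_nonpos.mpr (by positivity : (0:ℝ) ≤ 1/((n:ℝ)+1))
  have hξ1valinf : ∀ ω, ω ∈ Dinf → ξ1 ω = ξ0 ω := by
    intro ω hω
    rw [hξ1def]; dsimp only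
    calc (⨅ k, g1 k ω) = ⨅ _ : ℕ, ξ0 ω :=
          iInf_congr fun k => by rw [hg1]; dsimp only; rw [if_neg (hω k)]
      _ = ξ0 ω := iInf_const
  have hXξ1Lbb : (fun ω => X ω + ξ1 ω) ∈ Lbb F := by
    refine ⟨@Measurable.ereal_add' Ω F _ _ hXm (hξ1m.mono hm le_rfl), cX + (-1), fun ω => ?_⟩
    rw [EReal.coe_add]
    exact add_le_add (hcX ω) (hξ1lb ω)
  have hlocD : ∀ n, ∀ᵐ ω ∂P, ω ∈ D n → β (fun ω' => X ω' + ξ1 ω') ω = β (Yn n) ω := by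
    intro n
    have l1 := hCPM.loc _ hXξ1Lbb (D n) (hDm n)
    have l2 := hCPM.loc _ (hYnLbb n) (D n) (hDm n)
    have heq : (D n).indicator (fun ω' => X ω' + ξ1 ω') = (D n).indicator (Yn n) := by
      funext ω
      by_cases hω : ω ∈ D n
      · rw [Set.indicator_of_mem hω, Set.indicator_of_mem hω, hξ1val n ω hω]
      · rw [Set.indicator_of_notMem hω, Set.indicator_of_notMem hω]
    rw [heq] at l1
    filter_upwards [l1, l2] with ω e1 e2 hω
    rw [e1 hω, ← e2 hω]
  have hlocinf : ∀ᵐ ω ∂P, ω ∈ Dinf →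
      β (fun ω' => X ω' + ξ1 ω') ω = β (fun ω' => X ω' + ξ0 ω') ω := by
    have l1 := hCPM.loc _ hXξ1Lbb Dinf hDinfm
    have l2 := hCPM.loc _ hXξ0Lbb Dinf hDinfm
    have heq : Dinf.indicator (fun ω' => X ω' + ξ1 ω') =
        Dinf.indicator (fun ω' => X ω' + ξ0 ω') := by
      funext ω
      by_cases hω : ω ∈ Dinf
      · rw [Set.indicator_of_mem hω, Set.indicator_of_mem hω, hξ1valinf ω hω]
      · rw [Set.indicator_of_notMem hω, Set.indicator_of_notMem hω]
    rw [heq] at l1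
    filter_upwards [l1, l2] with ω e1 e2 hω
    rw [e1 hω, ← e2 hω]
  have hξ1M : ξ1 ∈ Mset F m P β z X := by
    refine ⟨hξ1Lbb, ?_⟩
    filter_upwards [ae_all_iff.mpr hlocD, hlocinf, hξ0M.2] with ω h1 h2 h3
    by_cases he : ∃ n, (z : EReal) < β (Yn n) ω
    · have hf : ω ∈ D (Nat.find he) := ⟨Nat.find_spec he, fun k hk => Nat.find_min he hk⟩
      rw [h1 _ hf]
      exact (Nat.find_spec he).le
    · rw [h2 (not_exists.mp he)]
      exact h3
  -- conclusion
  filter_upwards [hρ.2.1 ξ1 hξ1M, hcb2] with ω e1 e2 hz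
  rw [e2] at hz
  have he : ∃ n, (z : EReal) < β (Yn n) ω := lt_iSup_iff.mp hz
  have hf : ω ∈ D (Nat.find he) := ⟨Nat.find_spec he, fun k hk => Nat.find_min he hk⟩
  refine lt_of_le_of_lt (e1.trans_eq (hξ1val _ ω hf)) ?_
  exact_mod_cast neg_lt_zero.mpr (by positivity : (0:ℝ) < 1/((Nat.find he : ℝ)+1))
/-- for `B ∈ F_t`, `β_t(X) > z` on `B` iff `ρ^z_t(X) < 0` on `B`;
equivalently `β_t(X) ≤ z` on `B` iff `ρ^z_t(X) ≥ 0` on `B`. -/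
theorem stmt_6 {Ω : Type*} (F m : MeasurableSpace Ω) (hm : m ≤ F) (P : @Measure Ω F)
    (β : (Ω → EReal) → Ω → EReal) (zd zu : EReal)
    (hCPM : IsCPM F m P β zd zu)
    (z : ℝ) (hz₁ : zd < (z : EReal)) (hz₂ : (z : EReal) < zu)
    (X : Ω → EReal) (hX : X ∈ Lbb F)
    (ρ : Ω → EReal) (hρ : IsEssInfFam m P (Mset F m P β z X) ρ)
    (B : Set Ω) (hB : MeasurableSet[m] B) :
    ((∀ᵐ ω ∂P, ω ∈ B → (z : EReal) < β X ω) ↔ (∀ᵐ ω ∂P, ω ∈ B → ρ ω < 0)) ∧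
    ((∀ᵐ ω ∂P, ω ∈ B → β X ω ≤ (z : EReal)) ↔ (∀ᵐ ω ∂P, ω ∈ B → 0 ≤ ρ ω)) := by
  have G1 := auxG1 F m hm P β zd zu hCPM z hz₁ hz₂ X hX ρ hρ
  have G2 := auxG2 F m hm P β zd zu hCPM z hz₁ hz₂ X hX ρ hρ
  constructor
  · constructor
    · intro h
      filter_upwards [h, G1] with ω h1 h2 hB
      exact h2 (h1 hB)
    · intro h
      filter_upwards [h, G2] with ω h1 h2 hB
      rcases lt_or_ge (z : EReal) (β X ω) with hlt | hle
      · exact hlt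
      · exact absurd (h2 hle) (not_le.mpr (h1 hB))
  · constructor
    · intro h
      filter_upwards [h, G2] with ω h1 h2 hB
      exact h2 (h1 hB)
    · intro h
      filter_upwards [h, G1] with ω h1 h2 hB
      rcases le_or_gt (β X ω) (z : EReal) with hle | hlt
      · exact hle
      · exact absurd (h1 hB) (not_le.mpr (h2 hlt))
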